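/- Let 𝔽 be ℝ or ℂ, X a Banach space over 𝔽 with dim X ≥ 2, and 𝒜 a standard operator algebra in B(X). If S ∈ 𝒜 satisfies [A, S]₃ = 0 for all A ∈ 𝒜 and S is not a scalar multiple of I, then there exist scalars α, β ∈ 𝔽 such that S² = αI + βS and 4α + β² = 0. -/

import Mathlib

set_option synthInstance.maxHeartbeats 400000
set_option maxHeartbeats 1000000

/-- The commutator `[A,B] = AB - BA` in a ring. -/
def bracket1 {R : Type*} [Ring R] (A B : R) : R := A * B - B * A

/-- The 3-commutator `[A,B]₃ = [[[A,B],B],B]` in a ring. -/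
def bracket3 {R : Type*} [Ring R] (A B : R) : R := bracket1 (bracket1 (bracket1 A B) B) B

/-- A standard operator algebra on a normed space `X` over `𝕜` is a subalgebra of
`B(X)` (automatically containing the identity) containing all finite-rank operators. -/
def IsStandardOperatorAlgebra (𝕜 : Type*) [RCLike 𝕜] (X : Type*)
    [NormedAddCommGroup X] [NormedSpace 𝕜 X]
    (𝒜 : Subalgebra 𝕜 (X →L[𝕜] X)) : Prop :=
  ∀ T : X →L[𝕜] X, FiniteDimensional 𝕜 (LinearMap.range (T : X →ₗ[𝕜] X)) → T ∈ 𝒜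

lemma rankone_mem' {𝕜 X : Type*} [RCLike 𝕜] [NormedAddCommGroup X] [NormedSpace 𝕜 X]
    (𝒜 : Subalgebra 𝕜 (X →L[𝕜] X)) (h𝒜 : IsStandardOperatorAlgebra 𝕜 X 𝒜)
    (f : X →L[𝕜] 𝕜) (x : X) : f.smulRight x ∈ 𝒜 := by
  apply h𝒜
  have hle : LinearMap.range (f.smulRight x : X →ₗ[𝕜] X) ≤ Submodule.span 𝕜 {x} := by
    rintro y ⟨u, rfl⟩
    exact Submodule.smul_mem _ _ (Submodule.mem_span_singleton_self x)
  haveI : FiniteDimensional 𝕜 (Submodule.span 𝕜 ({x} : Set X)) :=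
    FiniteDimensional.span_of_finite 𝕜 (Set.finite_singleton x)
  exact Submodule.finiteDimensional_of_le hle

lemma exists_smul_of_forall_smul' {𝕜 X : Type*} [Field 𝕜] [AddCommGroup X] [Module 𝕜 X]
    (T : X →ₗ[𝕜] X) (hT : ∀ v : X, ∃ c : 𝕜, T v = c • v) : ∃ l : 𝕜, ∀ v, T v = l • v := by
  by_cases hX : ∀ v : X, v = 0
  · exact ⟨0, fun v => by rw [hX v]; simp⟩
  push_neg at hX
  obtain ⟨v₀, hv₀⟩ := hX
  obtain ⟨c₀, hc₀⟩ := hT v₀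
  refine ⟨c₀, fun w => ?_⟩
  by_cases hw : ∃ a : 𝕜, w = a • v₀
  · obtain ⟨a, rfl⟩ := hw
    rw [map_smul, hc₀, smul_comm]
  · push_neg at hw
    obtain ⟨cw, hcw⟩ := hT w
    obtain ⟨cs, hcs⟩ := hT (v₀ + w)
    rw [map_add, hc₀, hcw, smul_add] at hcs
    have hkey : (c₀ - cs) • v₀ = (cs - cw) • w := by
      rw [← sub_eq_zero] at hcs ⊢
      rw [← hcs]
      module
    have hcseq : cs = cw := by
      by_contra hne
      apply hw ((cs - cw)⁻¹ * (c₀ - cs))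
      rw [mul_smul, hkey, smul_smul, inv_mul_cancel₀ (sub_ne_zero.mpr hne), one_smul]
    rw [hcseq, sub_self, zero_smul] at hkey
    have h0 : c₀ - cw = 0 := by
      by_contra hne
      exact hv₀ ((smul_eq_zero.mp hkey).resolve_left hne)
    rw [hcw, sub_eq_zero.mp h0]

theorem stmt_7 {𝕜 X : Type*} [RCLike 𝕜] [NormedAddCommGroup X] [NormedSpace 𝕜 X]
    [CompleteSpace X] (hdim : 2 ≤ Module.rank 𝕜 X)
    (𝒜 : Subalgebra 𝕜 (X →L[𝕜] X)) (h𝒜 : IsStandardOperatorAlgebra 𝕜 X 𝒜)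
    (S : 𝒜) (h : ∀ A : 𝒜, bracket3 A S = 0)
    (hns : ∀ l : 𝕜, S ≠ l • (1 : 𝒜)) :
    ∃ α β : 𝕜, S * S = α • (1 : 𝒜) + β • S ∧ 4 * α + β ^ 2 = 0 := by
  set S' : X →L[𝕜] X := (S : X →L[𝕜] X) with hS'
  -- the fundamental identity coming from rank one operators
  have key : ∀ (f : X →L[𝕜] 𝕜) (x u : X),
      f (S' (S' (S' u))) • x + ((3:𝕜) * f (S' u)) • S' (S' x)
        = ((3:𝕜) * f (S' (S' u))) • S' x + f u • S' (S' (S' x)) := by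
    intro f x u
    have h0 := h ⟨f.smulRight x, rankone_mem' 𝒜 h𝒜 f x⟩
    have h1 : bracket3 (f.smulRight x) S' = 0 := by
      have := congrArg Subtype.val h0
      simpa [bracket3, bracket1] using this
    have h2 := congrFun (congrArg DFunLike.coe h1) u
    simp only [bracket3, bracket1, ContinuousLinearMap.sub_apply, ContinuousLinearMap.mul_apply,
      ContinuousLinearMap.smulRight_apply, map_smul, map_sub, ContinuousLinearMap.zero_apply,
      smul_sub] at h2
    rw [← sub_eq_zero] at h2 ⊢
    rw [← h2]
    module
  -- find a vector not an eigenvector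
  obtain ⟨u₀, hu₀⟩ : ∃ u : X, ∀ c : 𝕜, S' u ≠ c • u := by
    by_contra hc
    push_neg at hc
    obtain ⟨l, hl⟩ := exists_smul_of_forall_smul' (S' : X →ₗ[𝕜] X)
      (fun v => by simpa using hc v)
    apply hns l
    apply Subtype.ext
    ext v
    simpa using hl v
  have hu0ne : u₀ ≠ 0 := fun h0 => hu₀ 0 (by simp [h0])
  -- u₀ and S' u₀ are linearly independent
  have li : LinearIndependent 𝕜 ![u₀, S' u₀] := by
    rw [LinearIndependent.pair_iff]
    intro s t hst
    rcases eq_or_ne t 0 with rfl | ht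
    · rw [zero_smul, add_zero] at hst
      exact ⟨(smul_eq_zero.mp hst).resolve_right hu0ne, rfl⟩
    · exfalso
      apply hu₀ (-s / t)
      have h1 : t • S' u₀ = (-s) • u₀ := by
        rw [← sub_eq_zero] at hst ⊢
        rw [← hst]; module
      calc S' u₀ = t⁻¹ • (t • S' u₀) := by
            rw [smul_smul, inv_mul_cancel₀ ht, one_smul]
        _ = t⁻¹ • ((-s) • u₀) := by rw [h1]
        _ = (-s / t) • u₀ := by rw [smul_smul, div_eq_mul_inv, mul_comm]
  -- a functional with f u₀ = 0 and f (S' u₀) = 1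
  set W := Submodule.span 𝕜 (Set.range ![u₀, S' u₀]) with hW
  haveI : FiniteDimensional 𝕜 W :=
    FiniteDimensional.span_of_finite 𝕜 (Set.finite_range _)
  obtain ⟨f, hf⟩ := (SeparatingDual.dualMap_surjective_iff (R := 𝕜) (V := X)
    (f := W.subtype)).mpr W.injective_subtype ((Module.Basis.span li).coord 1)
  have hfb : ∀ j : Fin 2, f (W.subtype (Module.Basis.span li j)) = (Module.Basis.span li).coord 1 (Module.Basis.span li j) := by
    intro j
    have := congrFun (congrArg DFunLike.coe hf) (Module.Basis.span li j)
    simpa [LinearMap.dualMap_apply, -Module.Basis.span_apply] using this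
  have hf0 : f u₀ = 0 := by
    have h5 := hfb 0
    rw [Module.Basis.coord_apply, Module.Basis.repr_self, Submodule.subtype_apply, Module.Basis.span_apply] at h5
    simpa [Module.Basis.coord_apply, Module.Basis.repr_self, Finsupp.single_eq_of_ne'] using h5
  have hf1 : f (S' u₀) = 1 := by
    have h5 := hfb 1
    rw [Module.Basis.coord_apply, Module.Basis.repr_self, Submodule.subtype_apply, Module.Basis.span_apply] at h5
    simpa [Module.Basis.coord_apply, Module.Basis.repr_self] using h5
  set β := f (S' (S' u₀)) with hβ
  set α := -(f (S' (S' (S' u₀)))) / 3 with hα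
  have hα3 : (3:𝕜) * α = -(f (S' (S' (S' u₀)))) := by
    rw [hα]; field_simp
  -- the quadratic relation
  have hquad : ∀ x, S' (S' x) = β • S' x + α • x := by
    intro x
    have hk := key f x u₀
    rw [hf0, hf1, mul_one] at hk
    have e2 : (3:𝕜) • (β • S' x + α • x)
        = ((3:𝕜) * β) • S' x + (-(f (S' (S' (S' u₀))))) • x := by
      rw [← hα3]; module
    have e : (3:𝕜) • S' (S' x) = (3:𝕜) • (β • S' x + α • x) := by
      rw [e2]
      rw [← sub_eq_zero] at hk ⊢
      rw [← hk]; module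
    exact smul_right_injective X (show (3:𝕜) ≠ 0 by norm_num) e
  -- computing f (S'³ u₀) in two ways gives the discriminant condition
  have hS3 : S' (S' (S' u₀)) = (β ^ 2 + α) • S' u₀ + (α * β) • u₀ := by
    rw [hquad (S' u₀), hquad u₀]
    module
  have hfS3 : f (S' (S' (S' u₀))) = β ^ 2 + α := by
    rw [hS3, map_add, map_smul, map_smul, hf0, hf1, smul_eq_mul, smul_eq_mul]
    ring
  have hdisc : 4 * α + β ^ 2 = 0 := by
    have : (3:𝕜) * α = -(β ^ 2 + α) := by rw [hα3, hfS3]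
    linear_combination this
  refine ⟨α, β, ?_, hdisc⟩
  apply Subtype.ext
  have : ((S * S : 𝒜) : X →L[𝕜] X) = S' * S' := rfl
  rw [this]
  have hrhs : ((α • (1 : 𝒜) + β • S : 𝒜) : X →L[𝕜] X) = α • 1 + β • S' := rfl
  rw [hrhs]
  ext x
  simp only [ContinuousLinearMap.mul_apply, ContinuousLinearMap.add_apply,
    ContinuousLinearMap.smul_apply, ContinuousLinearMap.one_apply]
  rw [hquad x]
  abel
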